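/- Let Λ ⊂ ℝ^N be a lattice of rank 3 with successive minima λ1 ≤ λ2 ≤ λ3, and let x1, x2, x3 ∈ Λ be linearly independent vectors with ‖xi‖ = λi for i = 1, 2, 3. Let θij be the angle between xi and xj, and set K12 = λ1/λ2 and K23 = λ2/λ3. Then ‖x1 − x2 − x3‖ ≥ λ3, and consequently cos θ23 ≥ (1/2)·(2·K12·K23·cos θ12 + 2·K12·cos θ13 − K12²·K23 − K23). -/

import Mathlib

open Real InnerProductGeometry

/-- The `i`-th successive minimum of a lattice `Λ ⊆ ℝ^N`:
`λ_i = inf {μ > 0 : the closed ball of radius μ contains i linearly independent vectors of Λ}`. -/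
noncomputable def succMin {N : ℕ} (Λ : Submodule ℤ (EuclideanSpace ℝ (Fin N))) (i : ℕ) : ℝ :=
  sInf {μ : ℝ | 0 < μ ∧ ∃ v : Fin i → EuclideanSpace ℝ (Fin N),
    (∀ k, v k ∈ Λ) ∧ LinearIndependent ℝ v ∧ ∀ k, ‖v k‖ ≤ μ}

lemma succMin_le_of_witness {N : ℕ} (Λ : Submodule ℤ (EuclideanSpace ℝ (Fin N))) (n : ℕ)
    (v : Fin n → EuclideanSpace ℝ (Fin N)) (hv : ∀ k, v k ∈ Λ)
    (hli : LinearIndependent ℝ v) (μ : ℝ) (hμ : 0 < μ) (hb : ∀ k, ‖v k‖ ≤ μ) :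
    succMin Λ n ≤ μ :=
  csInf_le ⟨0, fun _ hx => le_of_lt hx.1⟩ ⟨hμ, v, hv, hli, hb⟩

lemma indep_aux {N : ℕ} (x1 x2 x3 : EuclideanSpace ℝ (Fin N))
    (hind : LinearIndependent ℝ ![x1, x2, x3]) :
    LinearIndependent ℝ ![x1, x2, x1 - x2 - x3] ∧ LinearIndependent ℝ ![x1, x1 - x2 - x3] := by
  rw [Fintype.linearIndependent_iff] at hind
  constructor
  · rw [Fintype.linearIndependent_iff]
    intro g hg
    simp only [Fin.sum_univ_three, Matrix.cons_val_zero, Matrix.cons_val_one, Matrix.head_cons,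
      Matrix.cons_val_two, Matrix.tail_cons] at hg
    have h := hind ![g 0 + g 2, g 1 - g 2, -g 2] (by
      simp only [Fin.sum_univ_three, Matrix.cons_val_zero, Matrix.cons_val_one, Matrix.head_cons,
        Matrix.cons_val_two, Matrix.tail_cons]
      rw [← hg]; module)
    have h0 := h 0; have h1 := h 1; have h2 := h 2
    simp only [Matrix.cons_val_zero, Matrix.cons_val_one, Matrix.head_cons,
      Matrix.cons_val_two, Matrix.tail_cons] at h0 h1 h2
    intro i; fin_cases i <;> simp <;> linarith
  · rw [Fintype.linearIndependent_iff]
    intro g hg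
    simp only [Fin.sum_univ_two, Matrix.cons_val_zero, Matrix.cons_val_one, Matrix.head_cons] at hg
    have h := hind ![g 0 + g 1, -g 1, -g 1] (by
      simp only [Fin.sum_univ_three, Matrix.cons_val_zero, Matrix.cons_val_one, Matrix.head_cons,
        Matrix.cons_val_two, Matrix.tail_cons]
      rw [← hg]; module)
    have h0 := h 0; have h1 := h 1
    simp only [Matrix.cons_val_zero, Matrix.cons_val_one, Matrix.head_cons] at h0 h1
    intro i; fin_cases i <;> simp <;> linarith

/-- Let `Λ ⊆ ℝ^N` be a lattice of rank 3 with successive minima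
`λ1 ≤ λ2 ≤ λ3` and `x1, x2, x3 ∈ Λ` linearly independent with `‖xi‖ = λi`. With
`K12 = λ1/λ2` and `K23 = λ2/λ3`, we have `‖x1 − x2 − x3‖ ≥ λ3` and consequently
`cos θ23 ≥ (1/2)(2·K12·K23·cos θ12 + 2·K12·cos θ13 − K12²·K23 − K23)`. -/
theorem norm_diff_ge_and_cos_bound {N : ℕ}
    (b : Fin 3 → EuclideanSpace ℝ (Fin N)) (hb : LinearIndependent ℝ b)
    (Λ : Submodule ℤ (EuclideanSpace ℝ (Fin N))) (hΛ : Λ = Submodule.span ℤ (Set.range b))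
    (lam1 lam2 lam3 : ℝ)
    (h1 : lam1 = succMin Λ 1) (h2 : lam2 = succMin Λ 2) (h3 : lam3 = succMin Λ 3)
    (hle12 : lam1 ≤ lam2) (hle23 : lam2 ≤ lam3)
    (x1 x2 x3 : EuclideanSpace ℝ (Fin N)) (hx1 : x1 ∈ Λ) (hx2 : x2 ∈ Λ) (hx3 : x3 ∈ Λ)
    (hind : LinearIndependent ℝ ![x1, x2, x3])
    (hn1 : ‖x1‖ = lam1) (hn2 : ‖x2‖ = lam2) (hn3 : ‖x3‖ = lam3) :
    lam3 ≤ ‖x1 - x2 - x3‖ ∧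
    (1 / 2) * (2 * (lam1 / lam2) * (lam2 / lam3) * Real.cos (angle x1 x2)
        + 2 * (lam1 / lam2) * Real.cos (angle x1 x3)
        - (lam1 / lam2) ^ 2 * (lam2 / lam3) - lam2 / lam3)
      ≤ Real.cos (angle x2 x3) := by
  obtain ⟨hliA, hliB⟩ := indep_aux x1 x2 x3 hind
  set w := x1 - x2 - x3 with hw
  have hne1 : x1 ≠ 0 := by
    have := hind.ne_zero 0; simpa using this
  have hnew : w ≠ 0 := by
    have := hliA.ne_zero 2; simpa using this
  have hwmem : w ∈ Λ := Λ.sub_mem (Λ.sub_mem hx1 hx2) hx3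
  have hl1pos : 0 < lam1 := hn1 ▸ norm_pos_iff.2 hne1
  have hl2pos : 0 < lam2 := lt_of_lt_of_le hl1pos hle12
  have hl3pos : 0 < lam3 := lt_of_lt_of_le hl2pos hle23
  set t := ‖w‖ with ht
  have htpos : 0 < t := norm_pos_iff.2 hnew
  -- main claim : lam3 ≤ t
  have hmain : lam3 ≤ t := by
    by_contra hc
    push_neg at hc
    -- Step 1: lam3 ≤ max lam2 t, so lam2 = lam3
    have s3 : lam3 ≤ max lam2 t := by
      rw [h3]
      apply succMin_le_of_witness Λ 3 ![x1, x2, w]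
      · intro k; fin_cases k
        · exact hx1
        · exact hx2
        · exact hwmem
      · exact hliA
      · exact lt_of_lt_of_le hl2pos (le_max_left _ _)
      · intro k; fin_cases k
        · show ‖x1‖ ≤ max lam2 t
          rw [hn1]; exact le_trans hle12 (le_max_left _ _)
        · show ‖x2‖ ≤ max lam2 t
          rw [hn2]; exact le_max_left _ _
        · exact le_max_right _ _
    have e23 : lam2 = lam3 := le_antisymm hle23 (by
      rcases max_cases lam2 t with ⟨hm, _⟩ | ⟨hm, _⟩
      · rw [hm] at s3; exact s3
      · rw [hm] at s3; linarith)
    -- Step 2: lam2 ≤ max lam1 t, so lam1 = lam2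
    have s2 : lam2 ≤ max lam1 t := by
      rw [h2]
      apply succMin_le_of_witness Λ 2 ![x1, w]
      · intro k; fin_cases k
        · exact hx1
        · exact hwmem
      · exact hliB
      · exact lt_of_lt_of_le hl1pos (le_max_left _ _)
      · intro k; fin_cases k
        · show ‖x1‖ ≤ max lam1 t
          rw [hn1]; exact le_max_left _ _
        · exact le_max_right _ _
    have e12 : lam1 = lam2 := le_antisymm hle12 (by
      rcases max_cases lam1 t with ⟨hm, _⟩ | ⟨hm, _⟩
      · rw [hm] at s2; exact s2
      · rw [hm] at s2; linarith)
    -- Step 3: lam1 ≤ t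
    have s1 : lam1 ≤ t := by
      rw [h1]
      apply succMin_le_of_witness Λ 1 ![w]
      · intro k; fin_cases k
        exact hwmem
      · exact linearIndependent_unique_iff.2 (by simpa using hnew)
      · exact htpos
      · intro k; fin_cases k
        exact le_refl t
    linarith
  refine ⟨hmain, ?_⟩
  -- now the cosine inequality
  have hexp : t ^ 2 = lam1 ^ 2 + lam2 ^ 2 + lam3 ^ 2
      - 2 * (inner ℝ x1 x2 : ℝ) - 2 * (inner ℝ x1 x3 : ℝ) + 2 * (inner ℝ x2 x3 : ℝ) := by
    have e1 : t ^ 2 = ‖(x1 - x2) - x3‖ ^ 2 := by rw [ht, hw]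
    rw [e1, norm_sub_sq_real, norm_sub_sq_real, inner_sub_left, hn1, hn2, hn3]
    ring
  have hkey : lam3 ^ 2 ≤ t ^ 2 := by nlinarith
  have hc12 : Real.cos (angle x1 x2) = (inner ℝ x1 x2 : ℝ) / (lam1 * lam2) := by
    rw [cos_angle, hn1, hn2]
  have hc13 : Real.cos (angle x1 x3) = (inner ℝ x1 x3 : ℝ) / (lam1 * lam3) := by
    rw [cos_angle, hn1, hn3]
  have hc23 : Real.cos (angle x2 x3) = (inner ℝ x2 x3 : ℝ) / (lam2 * lam3) := by
    rw [cos_angle, hn2, hn3]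
  rw [hexp] at hkey
  have hq : 2 * (inner ℝ x1 x2 : ℝ) + 2 * (inner ℝ x1 x3 : ℝ) - lam1 ^ 2 - lam2 ^ 2
      ≤ 2 * (inner ℝ x2 x3 : ℝ) := by nlinarith
  have hne2 : lam2 ≠ 0 := ne_of_gt hl2pos
  have hne1 : lam1 ≠ 0 := ne_of_gt hl1pos
  have hne3 : lam3 ≠ 0 := ne_of_gt hl3pos
  rw [hc12, hc13, hc23]
  have hrw : (1 / 2) * (2 * (lam1 / lam2) * (lam2 / lam3) * ((inner ℝ x1 x2 : ℝ) / (lam1 * lam2))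
        + 2 * (lam1 / lam2) * ((inner ℝ x1 x3 : ℝ) / (lam1 * lam3))
        - (lam1 / lam2) ^ 2 * (lam2 / lam3) - lam2 / lam3)
      = (2 * (inner ℝ x1 x2 : ℝ) + 2 * (inner ℝ x1 x3 : ℝ) - lam1 ^ 2 - lam2 ^ 2)
          / (2 * (lam2 * lam3)) := by
    field_simp
  rw [hrw, div_le_div_iff₀ (by positivity) (by positivity)]
  nlinarith [hq, mul_pos hl2pos hl3pos]
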